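/- Let G be a connected graph on [n] that has the interval property with respect to its labeling, and let H = in_lex(G). Then H contains no induced cycle of length 5 or more. -/

import Mathlib

open SimpleGraph

/-- `G` has the interval property with respect to its labeling: for every edge `{i,j}`
with `i < j`, every pair `{k,l}` with `i ≤ k < l ≤ j` is an edge of `G`. -/
def HasIntervalProperty {n : ℕ} (G : SimpleGraph (Fin n)) : Prop :=
  ∀ i j k l : Fin n, G.Adj i j → i < j → i ≤ k → k < l → l ≤ j → G.Adj k l

/-- The bipartite graph `in_lex(G)` on `{x_1,…,x_n} ∪ {y_1,…,y_n}` (here `Sum.inl i = x_i`,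
`Sum.inr j = y_j`) whose edges are the pairs `{x_i, y_j}` with `i < j` and `{i,j} ∈ E(G)`. -/
def inLex {n : ℕ} (G : SimpleGraph (Fin n)) : SimpleGraph (Fin n ⊕ Fin n) :=
  SimpleGraph.fromRel (fun u v =>
    ∃ i j : Fin n, i < j ∧ G.Adj i j ∧ u = Sum.inl i ∧ v = Sum.inr j)

/-- `M` is an induced matching of `H`: a set of edges of `H`, pairwise vertex-disjoint,
such that no edge of `H` joins two vertices lying in distinct edges of `M`. -/
def IsInducedMatching {V : Type*} (H : SimpleGraph V) (M : Set (Sym2 V)) : Prop :=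
  M ⊆ H.edgeSet ∧
  (∀ e ∈ M, ∀ f ∈ M, e ≠ f → ∀ v, v ∈ e → v ∉ f) ∧
  (∀ e ∈ M, ∀ f ∈ M, e ≠ f → ∀ u ∈ e, ∀ v ∈ f, ¬ H.Adj u v)

/-- An indexed family of `m` pairwise distinct edges forming an induced matching of `H`. -/
def IsInducedMatchingFamily {V : Type*} (H : SimpleGraph V) {m : ℕ} (f : Fin m → Sym2 V) : Prop :=
  Function.Injective f ∧ IsInducedMatching H (Set.range f)

/-- `p` is an induced path of length `l` in `G`: `l+1` distinct vertices such that the edges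
of `G` among them are exactly the consecutive pairs. -/
def IsInducedPath {V : Type*} (G : SimpleGraph V) (l : ℕ) (p : Fin (l + 1) → V) : Prop :=
  Function.Injective p ∧
  ∀ a b : Fin (l + 1), G.Adj (p a) (p b) ↔ ((a : ℕ) + 1 = b ∨ (b : ℕ) + 1 = a)

/-- `c` is an induced cycle of length `k` in `H`: `k` distinct vertices such that the edges
of `H` among them are exactly the consecutive pairs (cyclically). -/
def IsInducedCycle {V : Type*} (H : SimpleGraph V) (k : ℕ) (c : Fin k → V) : Prop :=
  3 ≤ k ∧ Function.Injective c ∧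
  ∀ a b : Fin k, H.Adj (c a) (c b) ↔ (((a : ℕ) + 1) % k = b ∨ ((b : ℕ) + 1) % k = a)

/-- Condition (∗) for an induced matching `{x_{i t}, y_{j t}}` of `in_lex(G)`: for every
index `a` and vertex `t < i a` with `{t, j a} ∈ E(G)`, replacing `x_{i a}` by `x_t`
does not yield an induced matching of `in_lex(G)`. -/
def CondStar {n m : ℕ} (G : SimpleGraph (Fin n)) (i j : Fin m → Fin n) : Prop :=
  ∀ a : Fin m, ∀ t : Fin n, t < i a → G.Adj t (j a) →
    ¬ IsInducedMatchingFamily (inLex G)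
        (fun u => if u = a then s(Sum.inl t, Sum.inr (j u))
                  else s(Sum.inl (i u), Sum.inr (j u)))

/-- If `G` is connected and has the interval property, then the bipartite graph
`H = in_lex(G)` contains no induced cycle of length at least 5. -/
lemma inLex_adj {n : ℕ} {G : SimpleGraph (Fin n)} {u v : Fin n ⊕ Fin n} :
    (inLex G).Adj u v ↔
      (∃ i j, i < j ∧ G.Adj i j ∧ u = Sum.inl i ∧ v = Sum.inr j) ∨
      (∃ i j, i < j ∧ G.Adj i j ∧ u = Sum.inr j ∧ v = Sum.inl i) := by
  unfold inLex
  rw [SimpleGraph.fromRel_adj]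
  constructor
  · rintro ⟨hne, h | h⟩
    · obtain ⟨i, j, h1, h2, h3, h4⟩ := h; exact Or.inl ⟨i, j, h1, h2, h3, h4⟩
    · obtain ⟨i, j, h1, h2, h3, h4⟩ := h; exact Or.inr ⟨i, j, h1, h2, h4, h3⟩
  · rintro (⟨i, j, h1, h2, rfl, rfl⟩ | ⟨i, j, h1, h2, rfl, rfl⟩)
    · exact ⟨by simp, Or.inl ⟨i, j, h1, h2, rfl, rfl⟩⟩
    · exact ⟨by simp, Or.inr ⟨i, j, h1, h2, rfl, rfl⟩⟩

theorem stmt_2 {n : ℕ} (G : SimpleGraph (Fin n)) (hconn : G.Connected)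
    (hG : HasIntervalProperty G) :
    ∀ k : ℕ, 5 ≤ k → ∀ c : Fin k → (Fin n ⊕ Fin n), ¬ IsInducedCycle (inLex G) k c := by
  intro k hk c hC
  obtain ⟨-, -, hadj⟩ := hC
  haveI : NeZero k := ⟨by omega⟩
  haveI : Nonempty (Fin k) := ⟨⟨0, by omega⟩⟩
  have hv : ∀ p : Fin k, ((p + 1 : Fin k) : ℕ) = ((p : ℕ) + 1) % k := fun p => by
    rw [Fin.val_add, Fin.val_one', Nat.add_mod_mod]
  have hcons : ∀ p : Fin k, (inLex G).Adj (c p) (c (p + 1)) := fun p => by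
    rw [hadj]; exact Or.inl (hv p).symm
  -- there is a position holding a right-side vertex
  have hex : ∃ q : Fin k, ∃ j, c q = Sum.inr j := by
    rcases inLex_adj.mp (hcons 0) with ⟨i, j, -, -, -, h4⟩ | ⟨i, j, -, -, h3, -⟩
    · exact ⟨0 + 1, j, h4⟩
    · exact ⟨0, j, h3⟩
  obtain ⟨q0, j0, hq0⟩ := hex
  -- choose the position whose right-side value is maximal
  obtain ⟨p, hp⟩ := Finite.exists_max
    (fun q : Fin k => Sum.elim (fun _ => 0) (fun j : Fin n => (j : ℕ) + 1) (c q))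
  obtain ⟨B, hpB⟩ : ∃ B, c p = Sum.inr B := by
    have h0 := hp q0
    rw [hq0] at h0
    cases hcp : c p with
    | inl a => rw [hcp] at h0; simp at h0
    | inr b => exact ⟨b, rfl⟩
  have hmax : ∀ (r : Fin k) (j : Fin n), c r = Sum.inr j → (j : ℕ) ≤ (B : ℕ) := by
    intro r j hr
    have h0 := hp r
    rw [hr, hpB] at h0
    simpa using h0
  set q : Fin k := p - 2 with hq
  have hq2 : q + 2 = p := by rw [hq]; open Fin.CommRing in ring
  have e1 : ((q + 1 : Fin k) : ℕ) = ((q : ℕ) + 1) % k := hv q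
  have e2 : ((q + 2 : Fin k) : ℕ) = ((q : ℕ) + 2) % k := by
    rw [show (q + 2 : Fin k) = (q + 1) + 1 by open Fin.CommRing in ring, hv, e1, Nat.mod_add_mod]
  have e3 : ((q + 3 : Fin k) : ℕ) = ((q : ℕ) + 3) % k := by
    rw [show (q + 3 : Fin k) = (q + 2) + 1 by open Fin.CommRing in ring, hv, e2, Nat.mod_add_mod]
  have e4 : ((q + 4 : Fin k) : ℕ) = ((q : ℕ) + 4) % k := by
    rw [show (q + 4 : Fin k) = (q + 3) + 1 by open Fin.CommRing in ring, hv, e3, Nat.mod_add_mod]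
  have hcq2 : c (q + 2) = Sum.inr B := by rw [hq2]; exact hpB
  -- position q+3 holds x_{A1}
  have h23 := hcons (q + 2)
  rw [show (q + 2) + (1 : Fin k) = q + 3 by open Fin.CommRing in ring, hcq2] at h23
  rcases inLex_adj.mp h23 with ⟨i, j, -, -, h3, -⟩ | ⟨A1, j, hA1B, hGA1B, hj, hcq3⟩
  · exact absurd h3 (by simp)
  obtain rfl := Sum.inr.inj hj
  -- position q+1 holds x_{A0}
  have h12 := hcons (q + 1)
  rw [show (q + 1) + (1 : Fin k) = q + 2 by open Fin.CommRing in ring, hcq2] at h12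
  rcases inLex_adj.mp h12 with ⟨A0, j, hA0B, hGA0B, hcq1, hj⟩ | ⟨i, j, -, -, -, h4⟩
  swap
  · exact absurd h4 (by simp)
  obtain rfl := Sum.inr.inj hj
  -- position q+4 holds y_{Bp}
  have h34 := hcons (q + 3)
  rw [show (q + 3) + (1 : Fin k) = q + 4 by open Fin.CommRing in ring, hcq3] at h34
  rcases inLex_adj.mp h34 with ⟨i, Bp, hA1Bp, hGA1Bp, hu, hcq4⟩ | ⟨i, j, -, -, hu, -⟩
  swap
  · exact absurd hu (by simp)
  obtain rfl := Sum.inl.inj hu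
  -- position q holds y_{Bm}
  have h01 := hcons q
  rw [hcq1] at h01
  rcases inLex_adj.mp h01 with ⟨i, j, -, -, -, h4⟩ | ⟨i, Bm, hA0Bm, hGA0Bm, hcq0, hu⟩
  · exact absurd h4 (by simp)
  obtain rfl := Sum.inl.inj hu
  -- maximality
  have hBp : (Bp : ℕ) ≤ (B : ℕ) := hmax (q + 4) Bp hcq4
  have hBm : (Bm : ℕ) ≤ (B : ℕ) := hmax q Bm hcq0
  -- non-edges of the induced cycle
  have hnon1 : ¬ (inLex G).Adj (c (q + 1)) (c (q + 4)) := by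
    rw [hadj]
    rintro (h | h)
    · rw [e1, Nat.mod_add_mod, e4] at h
      have h2 : Nat.ModEq k ((q : ℕ) + 1 + 1) ((q : ℕ) + 4) := h
      have h3 := Nat.le_of_dvd (by omega) ((Nat.modEq_iff_dvd' (by omega)).mp h2)
      omega
    · rw [e4, Nat.mod_add_mod, e1] at h
      have h2 : Nat.ModEq k ((q : ℕ) + 1) ((q : ℕ) + 4 + 1) := h.symm
      have h3 := Nat.le_of_dvd (by omega) ((Nat.modEq_iff_dvd' (by omega)).mp h2)
      omega
  have hnon2 : ¬ (inLex G).Adj (c (q + 3)) (c q) := by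
    rw [hadj]
    rintro (h | h)
    · rw [e3, Nat.mod_add_mod] at h
      have h2 : Nat.ModEq k (q : ℕ) ((q : ℕ) + 3 + 1) :=
        (Nat.mod_eq_of_lt q.isLt).trans h.symm
      have h3 := Nat.le_of_dvd (by omega) ((Nat.modEq_iff_dvd' (by omega)).mp h2)
      omega
    · rw [e3] at h
      have h2 : Nat.ModEq k ((q : ℕ) + 1) ((q : ℕ) + 3) := h
      have h3 := Nat.le_of_dvd (by omega) ((Nat.modEq_iff_dvd' (by omega)).mp h2)
      omega
  -- the interval property forces Bp ≤ A0 and Bm ≤ A1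
  have key1 : (Bp : ℕ) ≤ (A0 : ℕ) := by
    by_contra hcon
    push_neg at hcon
    have hlt : A0 < Bp := Fin.lt_def.mpr hcon
    have hGadj : G.Adj A0 Bp := hG A0 B A0 Bp hGA0B hA0B le_rfl hlt (Fin.le_def.mpr hBp)
    exact hnon1 (by
      rw [hcq1, hcq4]
      exact inLex_adj.mpr (Or.inl ⟨A0, Bp, hlt, hGadj, rfl, rfl⟩))
  have key2 : (Bm : ℕ) ≤ (A1 : ℕ) := by
    by_contra hcon
    push_neg at hcon
    have hlt : A1 < Bm := Fin.lt_def.mpr hcon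
    have hGadj : G.Adj A1 Bm := hG A1 B A1 Bm hGA1B hA1B le_rfl hlt (Fin.le_def.mpr hBm)
    exact hnon2 (by
      rw [hcq3, hcq0]
      exact inLex_adj.mpr (Or.inl ⟨A1, Bm, hlt, hGadj, rfl, rfl⟩))
  have l1 : (A0 : ℕ) < (Bm : ℕ) := hA0Bm
  have l2 : (A1 : ℕ) < (Bp : ℕ) := hA1Bp
  omega
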